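/- Let ρ be a strictly positive probability distribution on V, let E : V → ℝ satisfy E(v) ≠ 0 for all v, and let α ∈ ℝ. Define φ(v) = |E(v)|^α · ρ(v) / Σ_{w∈V} |E(w)|^α · ρ(w) and κ(v) = ρ(v)/φ(v). Then Var_ρ(E) − Var_φ(E·κ) = Cov_ρ(|E|^{2−α}, |E|^α), i.e., the difference of variances equals ⟨E²⟩_ρ − ⟨|E|^{2−α}⟩_ρ · ⟨|E|^α⟩_ρ. -/

import Mathlib

/-- Expectation of `X` under the distribution `p` on a finite set. -/
noncomputable def expec {V : Type*} [Fintype V] (p X : V → ℝ) : ℝ := ∑ v, p v * X v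

/-- Variance of `X` under the distribution `p` on a finite set. -/
noncomputable def vari {V : Type*} [Fintype V] (p X : V → ℝ) : ℝ :=
  expec p (fun v => X v ^ 2) - (expec p X) ^ 2

/-- with `φ(v) = |E(v)|^α ρ(v) / ∑_w |E(w)|^α ρ(w)` and
`κ = ρ/φ`, the difference of variances equals the covariance
`Cov_ρ(|E|^{2−α}, |E|^α) = ⟨E²⟩_ρ − ⟨|E|^{2−α}⟩_ρ ⟨|E|^α⟩_ρ`. -/
theorem variance_difference_is_covariance {V : Type*} [Fintype V]
    (ρ : V → ℝ)
    (hρ0 : ∀ v, 0 < ρ v) (hρ1 : ∀ v, ρ v ≤ 1) (hρsum : ∑ v, ρ v = 1)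
    (E : V → ℝ) (hE : ∀ v, E v ≠ 0) (α : ℝ)
    (φ : V → ℝ)
    (hφdef : ∀ v, φ v = |E v| ^ α * ρ v / ∑ w, |E w| ^ α * ρ w) :
    vari ρ E - vari φ (fun v => E v * (ρ v / φ v))
      = expec ρ (fun v => E v ^ 2)
        - expec ρ (fun v => |E v| ^ ((2 : ℝ) - α)) * expec ρ (fun v => |E v| ^ α) := by
  have hne : Nonempty V := by
    by_contra h
    rw [not_nonempty_iff] at h
    simp [Finset.univ_eq_empty] at hρsum
  set S : ℝ := ∑ w, |E w| ^ α * ρ w with hSdef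
  have hS : 0 < S :=
    Finset.sum_pos (fun v _ => mul_pos (Real.rpow_pos_of_pos (abs_pos.2 (hE v)) α) (hρ0 v))
      Finset.univ_nonempty
  have hφpos : ∀ v, 0 < φ v := fun v => by
    rw [hφdef v]
    exact div_pos (mul_pos (Real.rpow_pos_of_pos (abs_pos.2 (hE v)) α) (hρ0 v)) hS
  have h1 : ∀ v, φ v * (E v * (ρ v / φ v)) = ρ v * E v := fun v => by
    have := (hφpos v).ne'
    field_simp
  have h2 : ∀ v, φ v * (E v * (ρ v / φ v)) ^ 2 = S * (ρ v * |E v| ^ ((2:ℝ) - α)) := fun v => by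
    have hEv : (0:ℝ) < |E v| := abs_pos.2 (hE v)
    have hEα : (0:ℝ) < |E v| ^ α := Real.rpow_pos_of_pos hEv α
    have hrw : |E v| ^ ((2:ℝ) - α) = E v ^ 2 / |E v| ^ α := by
      rw [Real.rpow_sub hEv, Real.rpow_two, sq_abs]
    have hκ : ρ v / φ v = S / |E v| ^ α := by
      rw [div_eq_div_iff (hφpos v).ne' hEα.ne', hφdef v]
      field_simp
    rw [hrw, hκ, hφdef v]
    field_simp
  unfold vari expec
  rw [Finset.sum_congr rfl (fun v _ => h1 v), Finset.sum_congr rfl (fun v _ => h2 v),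
    ← Finset.mul_sum]
  have hScomm : S = ∑ v, ρ v * |E v| ^ α := by
    rw [hSdef]; exact Finset.sum_congr rfl (fun v _ => mul_comm _ _)
  have hc : ∀ v, ρ v * E v = ρ v * E v := fun _ => rfl
  rw [hScomm]
  ring
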